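/- A global minimizer of the ℓ2-Potts functional G_λ(x) = (1/2)‖y-x‖² + λ‖Lx‖_0 exists for every y ∈ ℝ^N and λ > 0, and every minimizer is piecewise constant with amplitudes on each segment equal to the mean of y over that segment. -/

import Mathlib

open Finset

noncomputable def l0diff {N : ℕ} (x : Fin N → ℝ) : ℕ :=
  (Finset.univ.filter (fun i : Fin (N - 1) =>
    x ⟨i.val + 1, by have := i.isLt; omega⟩ ≠ x ⟨i.val, by have := i.isLt; omega⟩)).card

namespace PottsAux

variable {N : ℕ}

def idx1 (j : Fin (N - 1)) : Fin N := ⟨j.val + 1, by have := j.isLt; omega⟩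
def idx0 (j : Fin (N - 1)) : Fin N := ⟨j.val, by have := j.isLt; omega⟩

noncomputable def segIdx (x : Fin N → ℝ) (i : Fin N) : ℕ :=
  (Finset.univ.filter (fun j : Fin (N - 1) =>
    j.val < i.val ∧ x (idx1 j) ≠ x (idx0 j))).card

lemma l0diff_eq (x : Fin N → ℝ) :
    l0diff x = (Finset.univ.filter (fun j : Fin (N - 1) =>
      x (idx1 j) ≠ x (idx0 j))).card := rfl

lemma segIdx_le_l0diff (x : Fin N → ℝ) (i : Fin N) : segIdx x i ≤ l0diff x := by
  rw [l0diff_eq]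
  apply Finset.card_le_card
  intro j hj
  simp only [Finset.mem_filter, Finset.mem_univ, true_and] at hj ⊢
  exact hj.2

lemma segIdx_mono (x : Fin N → ℝ) {i i' : Fin N} (h : i ≤ i') :
    segIdx x i ≤ segIdx x i' := by
  apply Finset.card_le_card
  intro j hj
  simp only [Finset.mem_filter, Finset.mem_univ, true_and] at hj ⊢
  exact ⟨lt_of_lt_of_le hj.1 h, hj.2⟩

lemma segIdx_succ (x : Fin N → ℝ) (j : Fin (N - 1)) :
    segIdx x (idx1 j) = segIdx x (idx0 j) +
      (if x (idx1 j) ≠ x (idx0 j) then 1 else 0) := by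
  classical
  unfold segIdx
  have hset : (Finset.univ.filter (fun t : Fin (N-1) =>
      t.val < (idx1 j).val ∧ x (idx1 t) ≠ x (idx0 t))) =
      (Finset.univ.filter (fun t : Fin (N-1) =>
        t.val < (idx0 j).val ∧ x (idx1 t) ≠ x (idx0 t))) ∪
      (Finset.univ.filter (fun t : Fin (N-1) =>
        t = j ∧ x (idx1 t) ≠ x (idx0 t))) := by
    ext t
    simp only [Finset.mem_filter, Finset.mem_univ, true_and, Finset.mem_union]; simp only [idx1, idx0]
    constructor
    · rintro ⟨ht, hP⟩
      rcases lt_or_eq_of_le (Nat.lt_succ_iff.mp ht) with h | h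
      · exact Or.inl ⟨h, hP⟩
      · exact Or.inr ⟨Fin.ext h, hP⟩
    · rintro (⟨ht, hP⟩ | ⟨ht, hP⟩)
      · exact ⟨by omega, hP⟩
      · subst ht; exact ⟨by omega, hP⟩
  rw [hset, Finset.card_union_of_disjoint]
  · congr 1
    by_cases hP : x (idx1 j) ≠ x (idx0 j)
    · rw [if_pos hP]
      rw [Finset.card_eq_one]
      refine ⟨j, ?_⟩
      ext t
      simp only [Finset.mem_filter, Finset.mem_univ, true_and, Finset.mem_singleton]
      constructor
      · rintro ⟨rfl, _⟩; rfl
      · rintro rfl; exact ⟨rfl, hP⟩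
    · rw [if_neg hP]
      rw [Finset.card_eq_zero]
      ext t
      simp only [Finset.mem_filter, Finset.mem_univ, true_and, Finset.notMem_empty,
        iff_false, not_and]
      rintro rfl; exact fun h => hP h
  · rw [Finset.disjoint_left]
    intro t ht ht'
    simp only [Finset.mem_filter, Finset.mem_univ, true_and] at ht ht'; simp only [idx0] at ht ht'
    rcases ht' with ⟨rfl, -⟩
    exact absurd ht.1 (lt_irrefl _)

lemma jump_of_segIdx_ne (x : Fin N → ℝ) (j : Fin (N - 1))
    (h : segIdx x (idx1 j) ≠ segIdx x (idx0 j)) : x (idx1 j) ≠ x (idx0 j) := by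
  intro he
  apply h
  rw [segIdx_succ, if_neg (by simpa using he), add_zero]

lemma eq_of_segIdx_eq (x : Fin N → ℝ) :
    ∀ (n : ℕ) (i i' : Fin N), i'.val = i.val + n → segIdx x i = segIdx x i' → x i = x i' := by
  intro n
  induction n with
  | zero => intro i i' h _; have : i = i' := Fin.ext (by omega); rw [this]
  | succ n ih =>
    intro i i' h hseg
    have hi : i.val < N - 1 := by have := i'.isLt; omega
    set j : Fin (N - 1) := ⟨i.val, hi⟩ with hj
    have h0 : idx0 j = i := Fin.ext rfl
    have hle1 : segIdx x i ≤ segIdx x (idx1 j) := by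
      apply segIdx_mono; rw [Fin.le_def]; simp [idx1, hj]
    have hle2 : segIdx x (idx1 j) ≤ segIdx x i' := by
      apply segIdx_mono; rw [Fin.le_def]; simp [idx1, hj]; omega
    have heq1 : segIdx x (idx1 j) = segIdx x i := by omega
    have hnj : ¬ x (idx1 j) ≠ x (idx0 j) := by
      intro hne
      have := segIdx_succ x j
      rw [if_pos hne, h0] at this
      omega
    push_neg at hnj
    have hx1 : x (idx1 j) = x i := by rw [hnj, h0]
    have := ih (idx1 j) i' (by simp [idx1, hj]; omega) (by omega)
    rw [← hx1, this]

lemma discrete_ivt (f : ℕ → ℕ) (h0 : f 0 = 0) (hstep : ∀ n, f (n + 1) ≤ f n + 1) :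
    ∀ m k, k ≤ f m → ∃ i, i ≤ m ∧ f i = k := by
  intro m
  induction m with
  | zero => intro k hk; exact ⟨0, le_refl 0, by omega⟩
  | succ m ih =>
    intro k hk
    by_cases h : k ≤ f m
    · obtain ⟨i, hi, hfi⟩ := ih k h
      exact ⟨i, by omega, hfi⟩
    · have := hstep m
      exact ⟨m + 1, le_refl _, by omega⟩

noncomputable def segF (x : Fin N → ℝ) (i : Fin N) : Fin (l0diff x + 1) :=
  ⟨segIdx x i, by have := segIdx_le_l0diff x i; omega⟩

lemma segF_mono (x : Fin N → ℝ) : Monotone (segF x) := by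
  intro i i' h
  simpa [segF, Fin.le_def] using segIdx_mono x h

lemma segF_const (x : Fin N → ℝ) {i i' : Fin N} (h : segF x i = segF x i') :
    x i = x i' := by
  have hs : segIdx x i = segIdx x i' := by
    simpa [segF, Fin.ext_iff] using h
  rcases le_total i.val i'.val with hle | hle
  · exact eq_of_segIdx_eq x (i'.val - i.val) i i' (by omega) hs
  · exact (eq_of_segIdx_eq x (i.val - i'.val) i' i (by omega) hs.symm).symm

lemma segIdx_last (hN : 1 ≤ N) (x : Fin N → ℝ) :
    segIdx x ⟨N - 1, by omega⟩ = l0diff x := by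
  rw [l0diff_eq]
  unfold segIdx
  congr 1
  ext t
  simp only [Finset.mem_filter, Finset.mem_univ, true_and, and_iff_right_iff_imp]
  intro _
  exact t.isLt

lemma segF_surj (hN : 1 ≤ N) (x : Fin N → ℝ) : Function.Surjective (segF x) := by
  intro k
  set f : ℕ → ℕ := fun n => segIdx x ⟨min n (N - 1), by omega⟩ with hf
  have h0 : f 0 = 0 := by
    simp only [hf]
    unfold segIdx
    rw [Finset.card_eq_zero]
    ext t
    simp only [Finset.mem_filter, Finset.mem_univ, true_and, Finset.notMem_empty, iff_false,
      not_and]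
    intro h
    omega
  have hstep : ∀ n, f (n + 1) ≤ f n + 1 := by
    intro n
    by_cases h : n < N - 1
    · have h1 : min (n + 1) (N - 1) = n + 1 := by omega
      have h2 : min n (N - 1) = n := by omega
      simp only [hf, h1, h2]
      have : (⟨n + 1, by omega⟩ : Fin N) = idx1 ⟨n, h⟩ := rfl
      have h2' : (⟨n, by omega⟩ : Fin N) = idx0 ⟨n, h⟩ := rfl
      rw [this, h2', segIdx_succ]
      split_ifs <;> omega
    · have h1 : min (n + 1) (N - 1) = N - 1 := by omega
      have h2 : min n (N - 1) = N - 1 := by omega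
      simp only [hf, h1, h2]
      omega
  have hlast : k.val ≤ f (N - 1) := by
    simp only [hf, min_self]
    rw [segIdx_last hN x]
    have := k.isLt
    omega
  obtain ⟨i, hi, hfi⟩ := discrete_ivt f h0 hstep (N - 1) k.val hlast
  refine ⟨⟨i, by omega⟩, ?_⟩
  have : min i (N - 1) = i := by omega
  apply Fin.ext
  simp only [segF]
  rw [← hfi]
  simp only [hf, this]

lemma exists_mu (hN : 1 ≤ N) (x : Fin N → ℝ) :
    ∃ μ : Fin (l0diff x + 1) → ℝ, ∀ i, x i = μ (segF x i) := by
  choose g hg using segF_surj hN x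
  exact ⟨fun k => x (g k), fun i => (segF_const x (hg (segF x i))).symm⟩

lemma sum_sq_mean {ι : Type*} (s : Finset ι) (y : ι → ℝ) (hs : s.Nonempty) (a : ℝ) :
    ∑ i ∈ s, (y i - a) ^ 2
      = ∑ i ∈ s, (y i - (∑ i ∈ s, y i) / (s.card : ℝ)) ^ 2
        + (s.card : ℝ) * ((∑ i ∈ s, y i) / (s.card : ℝ) - a) ^ 2 := by
  have hc : (0 : ℝ) < s.card := by exact_mod_cast Finset.card_pos.2 hs
  have expand : ∀ b : ℝ, ∑ i ∈ s, (y i - b) ^ 2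
      = ∑ i ∈ s, (y i) ^ 2 - 2 * b * (∑ i ∈ s, y i) + (s.card : ℝ) * b ^ 2 := by
    intro b
    rw [Finset.mul_sum]
    rw [← Finset.sum_sub_distrib]
    have : ((s.card : ℝ) * b ^ 2) = ∑ _i ∈ s, b ^ 2 := by
      rw [Finset.sum_const, nsmul_eq_mul]
    rw [this, ← Finset.sum_add_distrib]
    apply Finset.sum_congr rfl
    intro i _
    ring
  rw [expand, expand]
  field_simp
  ring


noncomputable def Mfun (y x : Fin N → ℝ) (i : Fin N) : ℝ :=
  (∑ j ∈ Finset.univ.filter (fun j => segF x j = segF x i), y j) /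
    ((Finset.univ.filter (fun j => segF x j = segF x i)).card : ℝ)

lemma Mfun_eq (y x : Fin N → ℝ) {i i' : Fin N} (h : segF x i = segF x i') :
    Mfun y x i = Mfun y x i' := by
  unfold Mfun
  rw [h]

lemma l0diff_Mfun_le (y x : Fin N → ℝ) : l0diff (Mfun y x) ≤ l0diff x := by
  rw [l0diff_eq, l0diff_eq]
  apply Finset.card_le_card
  intro j hj
  simp only [Finset.mem_filter, Finset.mem_univ, true_and] at hj ⊢
  intro he
  apply hj
  apply Mfun_eq
  apply Fin.ext
  simp only [segF]
  rw [segIdx_succ x j, if_neg (by simpa using he), add_zero]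

lemma quad_Mfun_le (hN : 1 ≤ N) (y x : Fin N → ℝ) :
    ∑ i, (y i - Mfun y x i) ^ 2 ≤ ∑ i, (y i - x i) ^ 2 := by
  obtain ⟨μ, hμ⟩ := exists_mu hN x
  rw [← Finset.sum_fiberwise Finset.univ (segF x) (fun i => (y i - Mfun y x i) ^ 2),
      ← Finset.sum_fiberwise Finset.univ (segF x) (fun i => (y i - x i) ^ 2)]
  apply Finset.sum_le_sum
  intro k _
  set s := Finset.univ.filter (fun i => segF x i = k) with hsdef
  obtain ⟨i0, hi0⟩ := segF_surj hN x k
  have hs : s.Nonempty := ⟨i0, by simp [hsdef, hi0]⟩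
  have h1 : ∑ i ∈ s, (y i - Mfun y x i) ^ 2
      = ∑ i ∈ s, (y i - (∑ j ∈ s, y j) / (s.card : ℝ)) ^ 2 := by
    apply Finset.sum_congr rfl
    intro i hi
    have hik : segF x i = k := by simpa [hsdef] using hi
    congr 1
    unfold Mfun
    rw [hik]
  have h2 : ∑ i ∈ s, (y i - x i) ^ 2 = ∑ i ∈ s, (y i - μ k) ^ 2 := by
    apply Finset.sum_congr rfl
    intro i hi
    have hik : segF x i = k := by simpa [hsdef] using hi
    rw [hμ i, hik]
  rw [h1, h2, sum_sq_mean s y hs (μ k)]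
  have : (0:ℝ) ≤ (s.card : ℝ) * ((∑ i ∈ s, y i) / (s.card : ℝ) - μ k) ^ 2 := by positivity
  linarith

end PottsAux



open PottsAux in
/-- A global minimizer of the ℓ2-Potts functional exists, and every minimizer is
piecewise constant with segment amplitudes equal to the segment means of `y`. -/
theorem potts_minimizer_exists_and_structure (N : ℕ) (hN : 1 ≤ N) (y : Fin N → ℝ)
    (lam : ℝ) (hlam : 0 < lam) :
    (∃ x : Fin N → ℝ, ∀ z : Fin N → ℝ,
        (1 / 2) * ∑ i, (y i - x i) ^ 2 + lam * (l0diff x : ℝ) ≤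
        (1 / 2) * ∑ i, (y i - z i) ^ 2 + lam * (l0diff z : ℝ)) ∧
    (∀ x : Fin N → ℝ,
      (∀ z : Fin N → ℝ,
        (1 / 2) * ∑ i, (y i - x i) ^ 2 + lam * (l0diff x : ℝ) ≤
        (1 / 2) * ∑ i, (y i - z i) ^ 2 + lam * (l0diff z : ℝ)) →
      ∃ (K : ℕ) (seg : Fin N → Fin K), Monotone seg ∧ Function.Surjective seg ∧
        ∃ μ : Fin K → ℝ, (∀ i, x i = μ (seg i)) ∧
          ∀ k, μ k = (∑ i ∈ Finset.univ.filter (fun i => seg i = k), y i) /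
            ((Finset.univ.filter (fun i => seg i = k)).card : ℝ)) := by
  classical
  set G : (Fin N → ℝ) → ℝ :=
    fun x => (1 / 2) * ∑ i, (y i - x i) ^ 2 + lam * (l0diff x : ℝ) with hG
  have hGM : ∀ z : Fin N → ℝ, G (Mfun y z) ≤ G z := by
    intro z
    have h1 := quad_Mfun_le hN y z
    have h2 : (l0diff (Mfun y z) : ℝ) ≤ (l0diff z : ℝ) := by
      exact_mod_cast l0diff_Mfun_le y z
    have h3 : lam * (l0diff (Mfun y z) : ℝ) ≤ lam * (l0diff z : ℝ) :=
      mul_le_mul_of_nonneg_left h2 hlam.le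
    simp only [hG]
    linarith
  constructor
  · -- existence
    set F : Finset (Fin N → ℝ) :=
      Finset.image (fun c : Fin N → Finset (Fin N) =>
        fun i => (∑ j ∈ c i, y j) / ((c i).card : ℝ)) Finset.univ with hF
    have hFne : F.Nonempty := by
      apply Finset.Nonempty.image
      exact Finset.univ_nonempty
    obtain ⟨x, hxF, hxmin⟩ := Finset.exists_min_image F G hFne
    refine ⟨x, fun z => ?_⟩
    have hMz : Mfun y z ∈ F := by
      rw [hF]
      apply Finset.mem_image_of_mem
      exact Finset.mem_univ (fun i => Finset.univ.filter (fun j => segF z j = segF z i))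
    calc G x ≤ G (Mfun y z) := hxmin _ hMz
      _ ≤ G z := hGM z
  · -- structure
    intro x hx
    refine ⟨l0diff x + 1, segF x, segF_mono x, segF_surj hN x, ?_⟩
    obtain ⟨μ, hμ⟩ := exists_mu hN x
    refine ⟨μ, hμ, ?_⟩
    intro k
    set s := Finset.univ.filter (fun i => segF x i = k) with hsdef
    obtain ⟨i0, hi0⟩ := segF_surj hN x k
    have hs : s.Nonempty := ⟨i0, by simp [hsdef, hi0]⟩
    have hc : (0 : ℝ) < (s.card : ℝ) := by exact_mod_cast Finset.card_pos.2 hs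
    set m : ℝ := (∑ i ∈ s, y i) / (s.card : ℝ) with hm
    set z : Fin N → ℝ := fun i => if segF x i = k then m else x i with hz
    -- l0diff z ≤ l0diff x
    have hl0 : l0diff z ≤ l0diff x := by
      rw [l0diff_eq, l0diff_eq]
      apply Finset.card_le_card
      intro j hj
      simp only [Finset.mem_filter, Finset.mem_univ, true_and] at hj ⊢
      by_cases hseg : segF x (idx1 j) = segF x (idx0 j)
      · exfalso
        apply hj
        simp only [hz, hseg]
        split_ifs with h
        · rfl
        · exact segF_const x hseg
      · apply jump_of_segIdx_ne
        intro he
        apply hseg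
        apply Fin.ext
        simpa [segF] using he
    -- quadratic comparison
    have hq : ∑ i, (y i - x i) ^ 2 ≤ ∑ i, (y i - z i) ^ 2 := by
      have h1 := hx z
      have h2 : (l0diff z : ℝ) ≤ (l0diff x : ℝ) := by exact_mod_cast hl0
      have h3 : lam * (l0diff z : ℝ) ≤ lam * (l0diff x : ℝ) :=
        mul_le_mul_of_nonneg_left h2 hlam.le
      linarith
    -- split over fiber
    have hsplit : ∀ w : Fin N → ℝ, ∑ i, (y i - w i) ^ 2
        = ∑ i ∈ s, (y i - w i) ^ 2
          + ∑ i ∈ Finset.univ.filter (fun i => ¬ segF x i = k), (y i - w i) ^ 2 := by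
      intro w
      rw [hsdef]
      exact (Finset.sum_filter_add_sum_filter_not Finset.univ _ _).symm
    rw [hsplit x, hsplit z] at hq
    have hoff : ∑ i ∈ Finset.univ.filter (fun i => ¬ segF x i = k), (y i - z i) ^ 2
        = ∑ i ∈ Finset.univ.filter (fun i => ¬ segF x i = k), (y i - x i) ^ 2 := by
      apply Finset.sum_congr rfl
      intro i hi
      simp only [Finset.mem_filter, Finset.mem_univ, true_and] at hi
      simp [hz, hi]
    rw [hoff] at hq
    have hfib : ∑ i ∈ s, (y i - x i) ^ 2 ≤ ∑ i ∈ s, (y i - z i) ^ 2 := by linarith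
    have hxs : ∑ i ∈ s, (y i - x i) ^ 2 = ∑ i ∈ s, (y i - μ k) ^ 2 := by
      apply Finset.sum_congr rfl
      intro i hi
      have hik : segF x i = k := by simpa [hsdef] using hi
      rw [hμ i, hik]
    have hzs : ∑ i ∈ s, (y i - z i) ^ 2 = ∑ i ∈ s, (y i - m) ^ 2 := by
      apply Finset.sum_congr rfl
      intro i hi
      have hik : segF x i = k := by simpa [hsdef] using hi
      simp [hz, hik]
    rw [hxs, hzs] at hfib
    have hexp := sum_sq_mean s y hs (μ k)
    rw [← hm] at hexp
    have hsq : (s.card : ℝ) * (m - μ k) ^ 2 ≤ 0 := by linarith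
    have : (m - μ k) ^ 2 ≤ 0 := by
      by_contra hcon
      push_neg at hcon
      nlinarith
    have hμm : μ k = m := by nlinarith [sq_nonneg (m - μ k)]
    rw [hμm, hm, hsdef]
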